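/- For each n, let G_n be a finite simple graph on n vertices, and suppose there is a constant C such that for all n, the sum over all vertices v of (deg_{G_n}(v))² is at most C·n. Then for every ε > 0 and every integer r ≥ 1 there exists δ > 0 such that for all n and every vertex subset U of G_n with |U| ≤ δ·n, the sum of the degrees of all vertices in the closed r-neighborhood N[U,r] is at most ε·n. -/

import Mathlib

open Finset

/-- The closed `r`-neighborhood of a vertex set `U`: all vertices at graph distance
at most `r` from some vertex of `U`. -/
def closedNbhd {n : ℕ} (G : SimpleGraph (Fin n)) [DecidableRel G.Adj]
    (U : Finset (Fin n)) : ℕ → Finset (Fin n)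
  | 0 => U
  | (r + 1) => closedNbhd G U r ∪ (closedNbhd G U r).biUnion (fun u => G.neighborFinset u)

/-- Iteration describing growth of neighborhood density. -/
noncomputable def gseq (C : ℝ) : ℕ → ℝ → ℝ
  | 0, δ => δ
  | (k+1), δ => gseq C k δ + Real.sqrt (C * gseq C k δ)

lemma gseq_nonneg (C : ℝ) (k : ℕ) {δ : ℝ} (hδ : 0 ≤ δ) : 0 ≤ gseq C k δ := by
  induction k with
  | zero => exact hδ
  | succ k ih => exact add_nonneg ih (Real.sqrt_nonneg _)

lemma gseq_small (C : ℝ) (hC : 0 ≤ C) (k : ℕ) :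
    ∀ ε : ℝ, 0 < ε → ∃ δ : ℝ, 0 < δ ∧ gseq C k δ ≤ ε := by
  induction k with
  | zero => intro ε hε; exact ⟨ε, hε, le_refl _⟩
  | succ k ih =>
    intro ε hε
    have hs : 0 < Real.sqrt (C + 1) := Real.sqrt_pos.2 (by linarith)
    set t : ℝ := min (ε / 2) ((ε / (2 * Real.sqrt (C + 1))) ^ 2) with ht
    have htpos : 0 < t := lt_min (by linarith) (by positivity)
    obtain ⟨δ, hδpos, hδ⟩ := ih t htpos
    refine ⟨δ, hδpos, ?_⟩
    have hg0 : 0 ≤ gseq C k δ := gseq_nonneg C k hδpos.le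
    have h1 : gseq C k δ ≤ ε / 2 := hδ.trans (min_le_left _ _)
    have h2 : Real.sqrt (C * gseq C k δ) ≤ ε / 2 := by
      have hle : C * gseq C k δ ≤ (C + 1) * gseq C k δ := by nlinarith
      calc Real.sqrt (C * gseq C k δ) ≤ Real.sqrt ((C + 1) * gseq C k δ) :=
            Real.sqrt_le_sqrt hle
        _ = Real.sqrt (C + 1) * Real.sqrt (gseq C k δ) := Real.sqrt_mul (by linarith) _
        _ ≤ Real.sqrt (C + 1) * (ε / (2 * Real.sqrt (C + 1))) := by
            refine mul_le_mul_of_nonneg_left ?_ hs.le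
            have : gseq C k δ ≤ (ε / (2 * Real.sqrt (C + 1))) ^ 2 :=
              hδ.trans (min_le_right _ _)
            calc Real.sqrt (gseq C k δ) ≤ Real.sqrt ((ε / (2 * Real.sqrt (C + 1))) ^ 2) :=
                  Real.sqrt_le_sqrt this
              _ = ε / (2 * Real.sqrt (C + 1)) := Real.sqrt_sq (by positivity)
        _ = ε / 2 := by field_simp
    show gseq C k δ + Real.sqrt (C * gseq C k δ) ≤ ε
    linarith

lemma deg_sum_le {n : ℕ} (G : SimpleGraph (Fin n)) [DecidableRel G.Adj] (C : ℝ)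
    (hdeg : (∑ v : Fin n, (G.degree v : ℝ) ^ 2) ≤ C * n) (S : Finset (Fin n)) :
    (∑ v ∈ S, (G.degree v : ℝ)) ≤ Real.sqrt ((S.card : ℝ) * (C * n)) := by
  have hnn : 0 ≤ ∑ v ∈ S, (G.degree v : ℝ) :=
    Finset.sum_nonneg fun v _ => by positivity
  have hcs : (∑ v ∈ S, (G.degree v : ℝ)) ^ 2 ≤ (S.card : ℝ) * ∑ v ∈ S, (G.degree v : ℝ) ^ 2 :=
    sq_sum_le_card_mul_sum_sq
  have hsub : (∑ v ∈ S, (G.degree v : ℝ) ^ 2) ≤ ∑ v : Fin n, (G.degree v : ℝ) ^ 2 :=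
    Finset.sum_le_sum_of_subset_of_nonneg (Finset.subset_univ S)
      (fun v _ _ => by positivity)
  have h2 : (∑ v ∈ S, (G.degree v : ℝ)) ^ 2 ≤ (S.card : ℝ) * (C * n) := by
    calc (∑ v ∈ S, (G.degree v : ℝ)) ^ 2 ≤ (S.card : ℝ) * ∑ v ∈ S, (G.degree v : ℝ) ^ 2 := hcs
      _ ≤ (S.card : ℝ) * (C * n) := by
          refine mul_le_mul_of_nonneg_left (hsub.trans (hdeg)) (by positivity)
  calc (∑ v ∈ S, (G.degree v : ℝ)) = Real.sqrt ((∑ v ∈ S, (G.degree v : ℝ)) ^ 2) :=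
        (Real.sqrt_sq hnn).symm
    _ ≤ Real.sqrt ((S.card : ℝ) * (C * n)) := Real.sqrt_le_sqrt h2

theorem degree_sum_nbhd_small
    (G : ∀ n, SimpleGraph (Fin n)) [inst : ∀ n, DecidableRel (G n).Adj] (C : ℝ)
    (hdeg : ∀ n, (∑ v : Fin n, ((G n).degree v : ℝ) ^ 2) ≤ C * n) :
    ∀ ε : ℝ, 0 < ε → ∀ r : ℕ, 1 ≤ r → ∃ δ : ℝ, 0 < δ ∧
      ∀ n, ∀ U : Finset (Fin n), (U.card : ℝ) ≤ δ * n →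
        (∑ v ∈ closedNbhd (G n) U r, ((G n).degree v : ℝ)) ≤ ε * n := by
  intro ε hε r _
  set C' : ℝ := max C 0 with hC'
  have hC'0 : 0 ≤ C' := le_max_right _ _
  have hdeg' : ∀ n, (∑ v : Fin n, ((G n).degree v : ℝ) ^ 2) ≤ C' * n := fun n =>
    (hdeg n).trans (mul_le_mul_of_nonneg_right (le_max_left _ _) (Nat.cast_nonneg n))
  -- choose δ
  have htpos : (0:ℝ) < ε ^ 2 / (C' + 1) := by positivity
  obtain ⟨δ, hδpos, hδ⟩ := gseq_small C' hC'0 r _ htpos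
  refine ⟨δ, hδpos, ?_⟩
  intro n U hU
  have hn : (0:ℝ) ≤ n := Nat.cast_nonneg n
  -- card bound by induction
  have hcard : ∀ k, ((closedNbhd (G n) U k).card : ℝ) ≤ gseq C' k δ * n := by
    intro k
    induction k with
    | zero => exact hU
    | succ k ih =>
      have hg0 : 0 ≤ gseq C' k δ := gseq_nonneg C' k hδpos.le
      have hbi : (((closedNbhd (G n) U k).biUnion fun u => (G n).neighborFinset u).card : ℝ)
          ≤ ∑ v ∈ closedNbhd (G n) U k, ((G n).degree v : ℝ) := by
        have := Finset.card_biUnion_le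
          (s := closedNbhd (G n) U k) (t := fun u => (G n).neighborFinset u)
        calc (((closedNbhd (G n) U k).biUnion fun u => (G n).neighborFinset u).card : ℝ)
            ≤ ((∑ v ∈ closedNbhd (G n) U k, ((G n).neighborFinset v).card : ℕ) : ℝ) := by
              exact_mod_cast this
          _ = ∑ v ∈ closedNbhd (G n) U k, ((G n).degree v : ℝ) := by
              push_cast [SimpleGraph.degree]; rfl
      have hsum : (∑ v ∈ closedNbhd (G n) U k, ((G n).degree v : ℝ))
          ≤ Real.sqrt (C' * gseq C' k δ) * n := by
        calc (∑ v ∈ closedNbhd (G n) U k, ((G n).degree v : ℝ))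
            ≤ Real.sqrt (((closedNbhd (G n) U k).card : ℝ) * (C' * n)) :=
              deg_sum_le (G n) C' (hdeg' n) _
          _ ≤ Real.sqrt ((gseq C' k δ * n) * (C' * n)) := by
              refine Real.sqrt_le_sqrt ?_
              exact mul_le_mul_of_nonneg_right ih (by positivity)
          _ = Real.sqrt (C' * gseq C' k δ) * n := by
              rw [show (gseq C' k δ * n) * (C' * n) = (C' * gseq C' k δ) * n ^ 2 by ring,
                Real.sqrt_mul (by positivity), Real.sqrt_sq hn]
      show (((closedNbhd (G n) U k ∪ _)).card : ℝ) ≤ _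
      calc (((closedNbhd (G n) U k ∪ (closedNbhd (G n) U k).biUnion
              fun u => (G n).neighborFinset u)).card : ℝ)
          ≤ ((closedNbhd (G n) U k).card : ℝ) +
            (((closedNbhd (G n) U k).biUnion fun u => (G n).neighborFinset u).card : ℝ) := by
            exact_mod_cast Finset.card_union_le _ _
        _ ≤ gseq C' k δ * n + Real.sqrt (C' * gseq C' k δ) * n :=
            add_le_add ih (hbi.trans hsum)
        _ = gseq C' (k+1) δ * n := by rw [gseq]; ring
  -- final bound
  have hg0 : 0 ≤ gseq C' r δ := gseq_nonneg C' r hδpos.le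
  calc (∑ v ∈ closedNbhd (G n) U r, ((G n).degree v : ℝ))
      ≤ Real.sqrt (((closedNbhd (G n) U r).card : ℝ) * (C' * n)) :=
        deg_sum_le (G n) C' (hdeg' n) _
    _ ≤ Real.sqrt ((gseq C' r δ * n) * (C' * n)) := by
        refine Real.sqrt_le_sqrt ?_
        exact mul_le_mul_of_nonneg_right (hcard r) (by positivity)
    _ = Real.sqrt (C' * gseq C' r δ) * n := by
        rw [show (gseq C' r δ * n) * (C' * n) = (C' * gseq C' r δ) * n ^ 2 by ring,
          Real.sqrt_mul (by positivity), Real.sqrt_sq hn]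
    _ ≤ ε * n := by
        refine mul_le_mul_of_nonneg_right ?_ hn
        have h1 : C' * gseq C' r δ ≤ (C' + 1) * (ε ^ 2 / (C' + 1)) := by nlinarith
        have h2 : (C' + 1) * (ε ^ 2 / (C' + 1)) = ε ^ 2 := by field_simp
        calc Real.sqrt (C' * gseq C' r δ) ≤ Real.sqrt (ε ^ 2) :=
              Real.sqrt_le_sqrt (by rw [← h2]; exact h1)
          _ = ε := Real.sqrt_sq hε.le
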